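/- For every positive integer K and every integer k with 1 ≤ k ≤ 2K, the Gaver–Stehfest coefficient satisfies |ξ_k| ≤ (1/K!)·(k/2)·K^{K+2}·(2e²)^K. -/
import Mathlib

lemma choose_le_two_pow' (n m : ℕ) : n.choose m ≤ 2 ^ n := by
  rcases le_or_gt m n with h | h
  · calc n.choose m ≤ ∑ i ∈ Finset.range (n+1), n.choose i :=
        Finset.single_le_sum (f := fun i => n.choose i) (fun i _ => Nat.zero_le _)
          (Finset.mem_range.mpr (Nat.lt_succ_of_le h))
    _ = 2 ^ n := Nat.sum_range_choose n
  · simp [Nat.choose_eq_zero_of_lt h]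

noncomputable def gsXi (K k : ℕ) : ℝ :=
  ((-1 : ℝ) ^ (k + K) / (Nat.factorial K : ℝ)) *
    ∑ j ∈ Finset.Icc ((k + 1) / 2) (min k K),
      (j : ℝ) ^ (K + 1) * (Nat.choose K j : ℝ) * (Nat.choose (2 * j) j : ℝ) *
        (Nat.choose j (k - j) : ℝ)

theorem stmt_13 (K k : ℕ) (hK : 0 < K) (hk1 : 1 ≤ k) (hk2 : k ≤ 2 * K) :
    |gsXi K k| ≤ (1 / (Nat.factorial K : ℝ)) * ((k : ℝ) / 2) * (K : ℝ) ^ (K + 2) *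
      (2 * Real.exp 1 ^ 2) ^ K := by
  have hKf : (0:ℝ) < K.factorial := by positivity
  have he : (9:ℝ) ≤ 2 * Real.exp 1 ^ 2 := by
    nlinarith [Real.exp_one_gt_d9]
  have hK1 : (1:ℝ) ≤ (K:ℝ) := by exact_mod_cast hK
  set S := ∑ j ∈ Finset.Icc ((k + 1) / 2) (min k K),
      (j : ℝ) ^ (K + 1) * (Nat.choose K j : ℝ) * (Nat.choose (2 * j) j : ℝ) *
        (Nat.choose j (k - j) : ℝ) with hS
  have hSnn : 0 ≤ S := Finset.sum_nonneg fun j _ => by positivity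
  have habs : |gsXi K k| = (1 / (K.factorial : ℝ)) * S := by
    rw [gsXi, abs_mul, abs_div, abs_pow, abs_neg, abs_one, one_pow,
      abs_of_nonneg hSnn, Nat.abs_cast]
  have hbase : (1:ℝ) ≤ 2 * Real.exp 1 ^ 2 := by linarith
  have hpow : (9:ℝ)^K ≤ (2 * Real.exp 1 ^ 2)^K :=
    pow_le_pow_left₀ (by norm_num) he K
  have key : S ≤ ((k:ℝ)/2) * (K:ℝ)^(K+2) * (2 * Real.exp 1 ^ 2)^K := by
    rcases eq_or_lt_of_le hk1 with h1 | h2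
    · -- k = 1
      have hk : k = 1 := h1.symm
      subst hk
      have hmin : min 1 K = 1 := min_eq_left hK
      have hSval : S = 2 * (K:ℝ) := by
        rw [hS, hmin]
        simp [Nat.choose_one_right]
        ring
      rw [hSval]
      have hA : (K:ℝ) ≤ (K:ℝ)^(K+2) := by
        calc (K:ℝ) = (K:ℝ)^1 := (pow_one _).symm
        _ ≤ (K:ℝ)^(K+2) := pow_le_pow_right₀ hK1 (by omega)
      have hB : (2 * Real.exp 1 ^ 2) ≤ (2 * Real.exp 1 ^ 2)^K := by
        calc (2 * Real.exp 1 ^ 2) = (2 * Real.exp 1 ^ 2)^1 := (pow_one _).symm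
        _ ≤ (2 * Real.exp 1 ^ 2)^K := pow_le_pow_right₀ hbase hK
      push_cast
      nlinarith [pow_nonneg (le_trans zero_le_one hK1) (K+2)]
    · -- k ≥ 2
      have hk2' : (2:ℝ) ≤ (k:ℝ) := by exact_mod_cast h2
      have hterm : ∀ j ∈ Finset.Icc ((k + 1) / 2) (min k K),
          (j : ℝ) ^ (K + 1) * (Nat.choose K j : ℝ) * (Nat.choose (2 * j) j : ℝ) *
            (Nat.choose j (k - j) : ℝ)
          ≤ (K:ℝ)^(K+1) * ((8:ℝ)^j * (1:ℝ)^(K-j) * (K.choose j : ℝ)) := by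
        intro j hj
        obtain ⟨hj1, hj2⟩ := Finset.mem_Icc.mp hj
        have hjK : j ≤ K := le_trans hj2 (min_le_right _ _)
        have h1 : (j:ℝ)^(K+1) ≤ (K:ℝ)^(K+1) :=
          pow_le_pow_left₀ (by positivity) (by exact_mod_cast hjK) _
        have h2 : ((2*j).choose j : ℝ) ≤ 4^j := by
          calc ((2*j).choose j : ℝ) ≤ (2:ℝ)^(2*j) := by
                exact_mod_cast choose_le_two_pow' (2*j) j
          _ = 4^j := by rw [pow_mul]; norm_num
        have h3 : ((j).choose (k-j) : ℝ) ≤ 2^j := by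
          exact_mod_cast choose_le_two_pow' j (k-j)
        calc (j : ℝ) ^ (K + 1) * (K.choose j : ℝ) * ((2*j).choose j : ℝ) * ((j).choose (k-j) : ℝ)
            ≤ (K:ℝ)^(K+1) * (K.choose j : ℝ) * 4^j * 2^j := by gcongr <;> positivity
        _ = (K:ℝ)^(K+1) * ((8:ℝ)^j * (1:ℝ)^(K-j) * (K.choose j : ℝ)) := by
            rw [one_pow, show (8:ℝ)^j = 4^j * 2^j from by rw [← mul_pow]; norm_num]
            ring
      have hA : S ≤ ∑ j ∈ Finset.Icc ((k + 1) / 2) (min k K),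
          (K:ℝ)^(K+1) * ((8:ℝ)^j * (1:ℝ)^(K-j) * (K.choose j : ℝ)) :=
        Finset.sum_le_sum hterm
      have hB : ∑ j ∈ Finset.Icc ((k + 1) / 2) (min k K),
            (K:ℝ)^(K+1) * ((8:ℝ)^j * (1:ℝ)^(K-j) * (K.choose j : ℝ))
          ≤ ∑ j ∈ Finset.range (K+1),
            (K:ℝ)^(K+1) * ((8:ℝ)^j * (1:ℝ)^(K-j) * (K.choose j : ℝ)) := by
        apply Finset.sum_le_sum_of_subset_of_nonneg
        · intro j hj
          obtain ⟨_, hj2⟩ := Finset.mem_Icc.mp hj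
          exact Finset.mem_range.mpr (Nat.lt_succ_of_le (le_trans hj2 (min_le_right _ _)))
        · intro j _ _; positivity
      have hC : ∑ j ∈ Finset.range (K+1),
            (K:ℝ)^(K+1) * ((8:ℝ)^j * (1:ℝ)^(K-j) * (K.choose j : ℝ))
          = (K:ℝ)^(K+1) * 9^K := by
        rw [← Finset.mul_sum, ← add_pow]
        norm_num
      have hstep : S ≤ (K:ℝ)^(K+1) * 9^K := by
        rw [← hC]; exact le_trans hA hB
      have hKp : (K:ℝ)^(K+1) ≤ (K:ℝ)^(K+2) := pow_le_pow_right₀ hK1 (by omega)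
      have e1 : (K:ℝ)^(K+1) * 9^K ≤ (K:ℝ)^(K+1) * (2 * Real.exp 1 ^ 2)^K :=
        mul_le_mul_of_nonneg_left hpow (by positivity)
      have e2 : (K:ℝ)^(K+1) * (2 * Real.exp 1 ^ 2)^K
          ≤ (K:ℝ)^(K+2) * (2 * Real.exp 1 ^ 2)^K :=
        mul_le_mul_of_nonneg_right hKp (by positivity)
      have e3 : (K:ℝ)^(K+2) * (2 * Real.exp 1 ^ 2)^K
          ≤ ((k:ℝ)/2) * ((K:ℝ)^(K+2) * (2 * Real.exp 1 ^ 2)^K) :=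
        le_mul_of_one_le_left (by positivity) (by linarith)
      calc S ≤ (K:ℝ)^(K+1) * 9^K := hstep
      _ ≤ ((k:ℝ)/2) * (K:ℝ)^(K+2) * (2 * Real.exp 1 ^ 2)^K := by
          rw [mul_assoc]; linarith
  rw [habs]
  calc (1 / (K.factorial : ℝ)) * S
      ≤ (1 / (K.factorial : ℝ)) * (((k:ℝ)/2) * (K:ℝ)^(K+2) * (2 * Real.exp 1 ^ 2)^K) :=
        mul_le_mul_of_nonneg_left key (by positivity)
  _ = (1 / (Nat.factorial K : ℝ)) * ((k : ℝ) / 2) * (K : ℝ) ^ (K + 2) *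
      (2 * Real.exp 1 ^ 2) ^ K := by ring
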